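/- Consider the stationary Markov chain $\sigma^2_k = (\sigma^2_{k-1} U_k + C)/V_k$ where $U_k \sim \chi^2_p$, $V_k \sim \chi^2_{n+p}$ are all independent and independent of $\sigma^2_{k-1}$, with $\sigma^2_0$ distributed according to the stationary distribution $\mathrm{InverseGamma}(n/2, C/2)$, $n\ge 5$, $C>0$. Then for every $k \ge 0$, $\mathrm{Corr}(\sigma^2_k, \sigma^2_{k+1}) = p/(n+p-2)$. -/

import Mathlib

open MeasureTheory ProbabilityTheory

/-- The chi-squared distribution with `d` degrees of freedom. -/
noncomputable def chiSqMeasure (d : ℕ) : Measure ℝ :=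
  gammaMeasure ((d : ℝ) / 2) (1 / 2)

/-- The inverse-gamma distribution with shape `a` and scale `b`:
the law of `1/X` for `X ~ Gamma(a, rate b)`. -/
noncomputable def invGammaMeasure (a b : ℝ) : Measure ℝ :=
  (gammaMeasure a b).map (fun x => x⁻¹)

/-- Pearson correlation of two real random variables, written via integrals. -/
noncomputable def corrRV {Ω : Type*} [MeasurableSpace Ω] (μ : Measure Ω)
    (X Y : Ω → ℝ) : ℝ :=
  ((∫ ω, X ω * Y ω ∂μ) - (∫ ω, X ω ∂μ) * (∫ ω, Y ω ∂μ)) /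
    (Real.sqrt ((∫ ω, X ω ^ 2 ∂μ) - (∫ ω, X ω ∂μ) ^ 2) *
      Real.sqrt ((∫ ω, Y ω ^ 2 ∂μ) - (∫ ω, Y ω ∂μ) ^ 2))

section AuxGamma

open Real Set

lemma aux_integrableOn_rpow_exp {s r : ℝ} (hs : 0 < s) (hr : 0 < r) :
    IntegrableOn (fun x : ℝ => x ^ (s - 1) * Real.exp (-(r * x))) (Ioi 0) := by
  have h1 : IntegrableOn (fun x : ℝ => Real.exp (-(r * x)) * (r * x) ^ (s - 1)) (Ioi 0) := by
    have := (Real.GammaIntegral_convergent hs)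
    have h2 := (integrableOn_Ioi_comp_mul_left_iff
      (fun x : ℝ => Real.exp (-x) * x ^ (s - 1)) 0 hr).mpr (by simpa using this)
    simpa using h2
  have h3 : IntegrableOn
      (fun x : ℝ => r ^ (1-s) * (Real.exp (-(r * x)) * (r * x) ^ (s - 1))) (Ioi 0) :=
    h1.const_mul _
  apply h3.congr_fun ?_ measurableSet_Ioi
  intro x hx
  have hx' : (0:ℝ) < x := hx
  show r ^ (1-s) * (Real.exp (-(r * x)) * (r * x) ^ (s - 1)) = x ^ (s-1) * Real.exp (-(r * x))
  rw [mul_rpow hr.le hx'.le,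
    show r ^ (1-s) * (Real.exp (-(r*x)) * (r ^ (s-1) * x ^ (s-1)))
      = (r ^ (1-s) * r ^ (s-1)) * (x ^ (s-1) * Real.exp (-(r*x))) from by ring,
    ← Real.rpow_add hr]
  norm_num

lemma aux_gamma_rep (a r : ℝ) : gammaMeasure a r
    = volume.withDensity (fun x => ((Real.toNNReal (gammaPDFReal a r x)) : ENNReal)) := rfl

lemma aux_smul_eq_indicator {a r t : ℝ} (ha : 0 < a) (hr : 0 < r) :
    (fun x : ℝ => (Real.toNNReal (gammaPDFReal a r x)) • (x ^ t))
    =ᵐ[volume] Set.indicator (Ioi 0)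
      (fun x : ℝ => (r ^ a / Real.Gamma a) * (x ^ (a + t - 1) * Real.exp (-(r * x)))) := by
  filter_upwards [compl_mem_ae_iff.mpr (volume_singleton (a := (0:ℝ)))] with x hx
  simp only [NNReal.smul_def, Real.coe_toNNReal _ (gammaPDFReal_nonneg ha hr x), smul_eq_mul]
  rcases lt_trichotomy x 0 with h | h | h
  · rw [Set.indicator_of_notMem (by simpa using h.le), gammaPDFReal, if_neg (not_le.mpr h),
      zero_mul]
  · exact absurd h (by simpa using hx)
  · rw [Set.indicator_of_mem (Set.mem_Ioi.mpr h), gammaPDFReal, if_pos h.le]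
    rw [show a + t - 1 = (a - 1) + t from by ring, Real.rpow_add h]
    ring

lemma integrable_rpow_gammaMeasure {a r : ℝ} (ha : 0 < a) (hr : 0 < r) {t : ℝ}
    (hat : 0 < a + t) : Integrable (fun x : ℝ => x ^ t) (gammaMeasure a r) := by
  rw [aux_gamma_rep,
    integrable_withDensity_iff_integrable_smul ((measurable_gammaPDFReal a r).real_toNNReal)]
  refine (integrable_indicator_iff measurableSet_Ioi).mpr ?_ |>.congr
    (aux_smul_eq_indicator ha hr).symm
  exact ((aux_integrableOn_rpow_exp hat hr).const_mul _)

lemma integral_rpow_gammaMeasure {a r : ℝ} (ha : 0 < a) (hr : 0 < r) {t : ℝ}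
    (hat : 0 < a + t) :
    ∫ x, x ^ t ∂(gammaMeasure a r) = Real.Gamma (a + t) / Real.Gamma a / r ^ t := by
  rw [aux_gamma_rep,
    integral_withDensity_eq_integral_smul ((measurable_gammaPDFReal a r).real_toNNReal),
    integral_congr_ae (aux_smul_eq_indicator ha hr), integral_indicator measurableSet_Ioi]
  rw [MeasureTheory.integral_const_mul, integral_rpow_mul_exp_neg_mul_Ioi hat hr]
  have h1 : (1 / r : ℝ) ^ (a + t) = (r ^ a * r ^ t)⁻¹ := by
    rw [one_div, ← Real.rpow_add hr, Real.inv_rpow hr.le]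
  rw [h1]
  have hga : Real.Gamma a ≠ 0 := (Real.Gamma_pos_of_pos ha).ne'
  have hra : (r : ℝ) ^ a ≠ 0 := (Real.rpow_pos_of_pos hr a).ne'
  have hrt : (r : ℝ) ^ t ≠ 0 := (Real.rpow_pos_of_pos hr t).ne'
  field_simp

lemma gamma_mean {a r : ℝ} (ha : 0 < a) (hr : 0 < r) :
    ∫ x, x ∂(gammaMeasure a r) = a / r := by
  have h := integral_rpow_gammaMeasure ha hr (t := 1) (by linarith)
  simp only [Real.rpow_one] at h
  rw [h, Real.Gamma_add_one ha.ne', mul_div_assoc,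
    div_self (Real.Gamma_pos_of_pos ha).ne', mul_one]

lemma gamma_sq {a r : ℝ} (ha : 0 < a) (hr : 0 < r) :
    ∫ x, x ^ 2 ∂(gammaMeasure a r) = a * (a + 1) / r ^ 2 := by
  have h := integral_rpow_gammaMeasure ha hr (t := 2) (by linarith)
  have e1 : ∀ x : ℝ, x ^ (2:ℝ) = x ^ 2 := fun x => by
    rw [show (2:ℝ) = ((2:ℕ):ℝ) from by norm_num, Real.rpow_natCast]
  simp only [e1] at h
  rw [h, show a + 2 = (a + 1) + 1 from by ring, Real.Gamma_add_one (by linarith),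
    Real.Gamma_add_one ha.ne']
  have hga : Real.Gamma a ≠ 0 := (Real.Gamma_pos_of_pos ha).ne'
  field_simp

lemma gamma_inv_moment {a r : ℝ} (ha : 1 < a) (hr : 0 < r) :
    ∫ x, x⁻¹ ∂(gammaMeasure a r) = r / (a - 1) := by
  have h := integral_rpow_gammaMeasure (by linarith : (0:ℝ) < a) hr (t := -1) (by linarith)
  have e1 : ∀ x : ℝ, x ^ (-1:ℝ) = x⁻¹ := fun x => by
    rw [show (-1:ℝ) = ((-1:ℤ):ℝ) from by norm_num, Real.rpow_intCast, zpow_neg_one]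
  simp only [e1] at h
  rw [h, show a + -1 = a - 1 from by ring]
  have h2 : Real.Gamma a = (a - 1) * Real.Gamma (a - 1) := by
    rw [show a = (a - 1) + 1 from by ring, Real.Gamma_add_one (by linarith)]
    ring_nf
  have hg1 : Real.Gamma (a - 1) ≠ 0 := (Real.Gamma_pos_of_pos (by linarith)).ne'
  rw [h2]
  have ha1 : a - 1 ≠ 0 := by linarith
  field_simp

lemma gamma_inv_sq_moment {a r : ℝ} (ha : 2 < a) (hr : 0 < r) :
    ∫ x, (x⁻¹) ^ 2 ∂(gammaMeasure a r) = r ^ 2 / ((a - 1) * (a - 2)) := by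
  have h := integral_rpow_gammaMeasure (by linarith : (0:ℝ) < a) hr (t := -2) (by linarith)
  have e1 : ∀ x : ℝ, x ^ (-2:ℝ) = (x⁻¹) ^ 2 := fun x => by
    rw [show (-2:ℝ) = ((-2:ℤ):ℝ) from by norm_num, Real.rpow_intCast]
    rw [zpow_neg, inv_pow]
    norm_cast
  simp only [e1] at h
  rw [h, show a + -2 = a - 2 from by ring]
  have h2 : Real.Gamma a = (a - 1) * ((a - 2) * Real.Gamma (a - 2)) := by
    rw [show a = (a - 2) + 1 + 1 from by ring, Real.Gamma_add_one (by linarith),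
      Real.Gamma_add_one (by linarith)]
    ring_nf
  have hg1 : Real.Gamma (a - 2) ≠ 0 := (Real.Gamma_pos_of_pos (by linarith)).ne'
  rw [h2]
  have ha1 : a - 1 ≠ 0 := by linarith
  have ha2 : a - 2 ≠ 0 := by linarith
  have hr2 : (r:ℝ) ^ 2 ≠ 0 := pow_ne_zero _ hr.ne'
  field_simp

lemma integrable_id_gamma {a r : ℝ} (ha : 0 < a) (hr : 0 < r) :
    Integrable (fun x : ℝ => x) (gammaMeasure a r) := by
  have h := integrable_rpow_gammaMeasure ha hr (t := 1) (by linarith)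
  simpa [Real.rpow_one] using h

lemma integrable_sq_gamma {a r : ℝ} (ha : 0 < a) (hr : 0 < r) :
    Integrable (fun x : ℝ => x ^ 2) (gammaMeasure a r) := by
  have h := integrable_rpow_gammaMeasure ha hr (t := 2) (by linarith)
  have e1 : ∀ x : ℝ, x ^ (2:ℝ) = x ^ 2 := fun x => by
    rw [show (2:ℝ) = ((2:ℕ):ℝ) from by norm_num, Real.rpow_natCast]
  simpa only [e1] using h

lemma integrable_inv_gamma {a r : ℝ} (ha : 1 < a) (hr : 0 < r) :
    Integrable (fun x : ℝ => x⁻¹) (gammaMeasure a r) := by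
  have h := integrable_rpow_gammaMeasure (by linarith : (0:ℝ) < a) hr (t := -1) (by linarith)
  have e1 : ∀ x : ℝ, x ^ (-1:ℝ) = x⁻¹ := fun x => by
    rw [show (-1:ℝ) = ((-1:ℤ):ℝ) from by norm_num, Real.rpow_intCast, zpow_neg_one]
  simpa only [e1] using h

lemma integrable_inv_sq_gamma {a r : ℝ} (ha : 2 < a) (hr : 0 < r) :
    Integrable (fun x : ℝ => (x⁻¹) ^ 2) (gammaMeasure a r) := by
  have h := integrable_rpow_gammaMeasure (by linarith : (0:ℝ) < a) hr (t := -2) (by linarith)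
  have e1 : ∀ x : ℝ, x ^ (-2:ℝ) = (x⁻¹) ^ 2 := fun x => by
    rw [show (-2:ℝ) = ((-2:ℤ):ℝ) from by norm_num, Real.rpow_intCast]
    rw [zpow_neg, inv_pow]
    norm_cast
  simpa only [e1] using h

end AuxGamma

section AuxTransfer

lemma iIndepFun_ae_eq {Ω ι : Type*} [MeasurableSpace Ω] {μ : Measure Ω}
    {β : ι → Type*} [m : ∀ i, MeasurableSpace (β i)] {f g : ∀ i, Ω → β i}
    (hf : iIndepFun f μ) (hfg : ∀ i, f i =ᵐ[μ] g i) : iIndepFun g μ := by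
  rw [iIndepFun_iff_measure_inter_preimage_eq_mul] at hf ⊢
  intro S sets hmeas
  have h1 : ∀ i, (g i ⁻¹' sets i : Set Ω) =ᵐ[μ] (f i ⁻¹' sets i : Set Ω) := fun i => by
    filter_upwards [hfg i] with ω hω
    change (ω ∈ g i ⁻¹' sets i) = (ω ∈ f i ⁻¹' sets i)
    simp only [Set.mem_preimage, hω]
  have h2 : (⋂ i ∈ S, g i ⁻¹' sets i) =ᵐ[μ] (⋂ i ∈ S, f i ⁻¹' sets i) := by
    have hball : ∀ᵐ ω ∂μ, ∀ i ∈ S, f i ω = g i ω :=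
      (ae_ball_iff S.countable_toSet).mpr fun i _ => hfg i
    filter_upwards [hball] with ω hω
    change (ω ∈ ⋂ i ∈ S, g i ⁻¹' sets i) = (ω ∈ ⋂ i ∈ S, f i ⁻¹' sets i)
    simp only [eq_iff_iff, Set.mem_iInter, Set.mem_preimage]
    exact ⟨fun h i hi => by rw [hω i hi]; exact h i hi,
           fun h i hi => by rw [← hω i hi]; exact h i hi⟩
  rw [measure_congr h2, hf S hmeas]
  exact Finset.prod_congr rfl fun i _ => measure_congr (h1 i).symm

lemma rv_integral {Ω : Type*} [MeasurableSpace Ω] {μ : Measure Ω} {Z : Ω → ℝ}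
    (hZ : Measurable Z) {ν : Measure ℝ} (hmap : μ.map Z = ν) {g : ℝ → ℝ}
    (hg : Measurable g) : ∫ ω, g (Z ω) ∂μ = ∫ x, g x ∂ν := by
  rw [← hmap, integral_map hZ.aemeasurable hg.aestronglyMeasurable]

lemma rv_integrable {Ω : Type*} [MeasurableSpace Ω] {μ : Measure Ω} {Z : Ω → ℝ}
    (hZ : Measurable Z) {ν : Measure ℝ} (hmap : μ.map Z = ν) {g : ℝ → ℝ}
    (hg : Measurable g) (hint : Integrable g ν) : Integrable (fun ω => g (Z ω)) μ := by
  rw [← hmap] at hint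
  exact (integrable_map_measure hg.aestronglyMeasurable hZ.aemeasurable).mp hint

lemma invGamma_integral {a b : ℝ} {g : ℝ → ℝ} (hg : Measurable g) :
    ∫ x, g x ∂(invGammaMeasure a b) = ∫ x, g x⁻¹ ∂(gammaMeasure a b) := by
  rw [invGammaMeasure, integral_map measurable_inv.aemeasurable hg.aestronglyMeasurable]

lemma invGamma_integrable {a b : ℝ} {g : ℝ → ℝ} (hg : Measurable g)
    (h : Integrable (fun x => g x⁻¹) (gammaMeasure a b)) :
    Integrable g (invGammaMeasure a b) := by
  rw [invGammaMeasure,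
    integrable_map_measure hg.aestronglyMeasurable measurable_inv.aemeasurable]
  exact h

end AuxTransfer

/-- For the stationary chain `σ²_{k+1} = (σ²_k U + C)/V` with
`σ²_k ~ InverseGamma(n/2, C/2)`, `U ~ χ²_p`, `V ~ χ²_{n+p}` mutually independent,
the lag-one autocorrelation is `Corr(σ²_k, σ²_{k+1}) = p/(n+p-2)`. -/
theorem stationary_autocorr_regression
    {Ω : Type*} [MeasurableSpace Ω] (μ : Measure Ω) [IsProbabilityMeasure μ]
    (n p : ℕ) (hn : 5 ≤ n) (hp : 1 ≤ p) (C : ℝ) (hC : 0 < C)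
    (X U V : Ω → ℝ)
    (hX : μ.map X = invGammaMeasure ((n : ℝ) / 2) (C / 2))
    (hU : μ.map U = chiSqMeasure p)
    (hV : μ.map V = chiSqMeasure (n + p))
    (hindep : iIndepFun ![X, U, V] μ) :
    corrRV μ X (fun ω => (X ω * U ω + C) / V ω)
      = (p : ℝ) / ((n : ℝ) + (p : ℝ) - 2) := by
  -- basic numeric facts
  have hN5 : (5:ℝ) ≤ (n:ℝ) := by exact_mod_cast hn
  have hP1 : (1:ℝ) ≤ (p:ℝ) := by exact_mod_cast hp
  have hNP : ((n + p : ℕ) : ℝ) = (n:ℝ) + (p:ℝ) := by push_cast; ring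
  have hC2 : (0:ℝ) < C/2 := by linarith
  have haX : (2:ℝ) < (n:ℝ)/2 := by linarith
  have haX0 : (0:ℝ) < (n:ℝ)/2 := by linarith
  have haU : (0:ℝ) < (p:ℝ)/2 := by linarith
  have haV : (2:ℝ) < ((n:ℝ)+(p:ℝ))/2 := by linarith
  have haV0 : (0:ℝ) < ((n:ℝ)+(p:ℝ))/2 := by linarith
  have hhalf : (0:ℝ) < 1/2 := by norm_num
  have hn2 : (0:ℝ) < (n:ℝ) - 2 := by linarith
  have hn4 : (0:ℝ) < (n:ℝ) - 4 := by linarith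
  have hnp2 : (0:ℝ) < (n:ℝ) + (p:ℝ) - 2 := by linarith
  have hnp4 : (0:ℝ) < (n:ℝ) + (p:ℝ) - 4 := by linarith
  -- probability measures and a.e.-measurability
  haveI hgX : IsProbabilityMeasure (gammaMeasure ((n:ℝ)/2) (C/2)) :=
    isProbabilityMeasure_gammaMeasure haX0 hC2
  haveI hprobX : IsProbabilityMeasure (invGammaMeasure ((n:ℝ)/2) (C/2)) := by
    rw [invGammaMeasure]
    exact Measure.isProbabilityMeasure_map measurable_inv.aemeasurable
  haveI hprobU : IsProbabilityMeasure (chiSqMeasure p) := by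
    rw [chiSqMeasure]; exact isProbabilityMeasure_gammaMeasure haU hhalf
  haveI hprobV : IsProbabilityMeasure (chiSqMeasure (n+p)) := by
    rw [chiSqMeasure, hNP]
    exact isProbabilityMeasure_gammaMeasure haV0 hhalf
  have hXm : AEMeasurable X μ := by
    apply aemeasurable_of_map_neZero
    refine ⟨?_⟩; rw [hX]; exact IsProbabilityMeasure.ne_zero _
  have hUm : AEMeasurable U μ := by
    apply aemeasurable_of_map_neZero
    refine ⟨?_⟩; rw [hU]; exact IsProbabilityMeasure.ne_zero _
  have hVm : AEMeasurable V μ := by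
    apply aemeasurable_of_map_neZero
    refine ⟨?_⟩; rw [hV]; exact IsProbabilityMeasure.ne_zero _
  -- measurable modifications
  obtain ⟨X', hX'meas, hXX'⟩ : ∃ X', Measurable X' ∧ X =ᵐ[μ] X' :=
    ⟨hXm.mk X, hXm.measurable_mk, hXm.ae_eq_mk⟩
  obtain ⟨U', hU'meas, hUU'⟩ : ∃ U', Measurable U' ∧ U =ᵐ[μ] U' :=
    ⟨hUm.mk U, hUm.measurable_mk, hUm.ae_eq_mk⟩
  obtain ⟨V', hV'meas, hVV'⟩ : ∃ V', Measurable V' ∧ V =ᵐ[μ] V' :=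
    ⟨hVm.mk V, hVm.measurable_mk, hVm.ae_eq_mk⟩
  have hmapX : μ.map X' = invGammaMeasure ((n:ℝ)/2) (C/2) := by
    rw [← Measure.map_congr hXX']; exact hX
  have hmapU : μ.map U' = gammaMeasure ((p:ℝ)/2) (1/2) := by
    rw [← Measure.map_congr hUU', hU, chiSqMeasure]
  have hmapV : μ.map V' = gammaMeasure (((n:ℝ)+(p:ℝ))/2) (1/2) := by
    rw [← Measure.map_congr hVV', hV, chiSqMeasure, hNP]
  -- moments
  have EX : ∫ ω, X' ω ∂μ = C/((n:ℝ)-2) := by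
    have h1 : ∫ ω, X' ω ∂μ = ∫ x, x⁻¹ ∂(gammaMeasure ((n:ℝ)/2) (C/2)) :=
      (rv_integral (g := fun y => y) hX'meas hmapX measurable_id).trans
        (invGamma_integral (g := fun y => y) measurable_id)
    rw [h1, gamma_inv_moment (by linarith) hC2,
      div_eq_div_iff (by linarith) (by linarith)]
    ring
  have EX2 : ∫ ω, X' ω ^ 2 ∂μ = C^2/(((n:ℝ)-2)*((n:ℝ)-4)) := by
    have h1 : ∫ ω, X' ω ^ 2 ∂μ = ∫ x, (x⁻¹) ^ 2 ∂(gammaMeasure ((n:ℝ)/2) (C/2)) :=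
      (rv_integral (g := fun y => y ^ 2) hX'meas hmapX (measurable_id.pow_const 2)).trans
        (invGamma_integral (g := fun y => y ^ 2) (measurable_id.pow_const 2))
    rw [h1, gamma_inv_sq_moment haX hC2,
      div_eq_div_iff
        (mul_pos (show (0:ℝ) < (n:ℝ)/2 - 1 by linarith)
          (show (0:ℝ) < (n:ℝ)/2 - 2 by linarith)).ne' (mul_pos hn2 hn4).ne']
    ring
  have EU : ∫ ω, U' ω ∂μ = (p:ℝ) := by
    have h1 : ∫ ω, U' ω ∂μ = ∫ x, x ∂(gammaMeasure ((p:ℝ)/2) (1/2)) :=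
      rv_integral (g := fun y => y) hU'meas hmapU measurable_id
    rw [h1, gamma_mean haU hhalf]
    field_simp
  have EU2 : ∫ ω, U' ω ^ 2 ∂μ = (p:ℝ) * ((p:ℝ) + 2) := by
    have h1 : ∫ ω, U' ω ^ 2 ∂μ = ∫ x, x ^ 2 ∂(gammaMeasure ((p:ℝ)/2) (1/2)) :=
      rv_integral (g := fun y => y ^ 2) hU'meas hmapU (measurable_id.pow_const 2)
    rw [h1, gamma_sq haU hhalf]
    field_simp
  have EiV : ∫ ω, (V' ω)⁻¹ ∂μ = 1/((n:ℝ)+(p:ℝ)-2) := by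
    have h1 : ∫ ω, (V' ω)⁻¹ ∂μ = ∫ x, x⁻¹ ∂(gammaMeasure (((n:ℝ)+(p:ℝ))/2) (1/2)) :=
      rv_integral (g := fun y => y⁻¹) hV'meas hmapV measurable_inv
    rw [h1, gamma_inv_moment (by linarith) hhalf,
      div_eq_div_iff (by linarith) (by linarith)]
    ring
  have EiV2 : ∫ ω, ((V' ω)⁻¹) ^ 2 ∂μ = 1/(((n:ℝ)+(p:ℝ)-2)*((n:ℝ)+(p:ℝ)-4)) := by
    have h1 : ∫ ω, ((V' ω)⁻¹) ^ 2 ∂μ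
        = ∫ x, (x⁻¹) ^ 2 ∂(gammaMeasure (((n:ℝ)+(p:ℝ))/2) (1/2)) :=
      rv_integral (g := fun y => (y⁻¹) ^ 2) hV'meas hmapV (measurable_inv.pow_const 2)
    rw [h1, gamma_inv_sq_moment haV hhalf,
      div_eq_div_iff
        (mul_pos (show (0:ℝ) < ((n:ℝ)+(p:ℝ))/2 - 1 by linarith)
          (show (0:ℝ) < ((n:ℝ)+(p:ℝ))/2 - 2 by linarith)).ne' (mul_pos hnp2 hnp4).ne']
    ring
  -- integrability
  have intX : Integrable X' μ :=
    rv_integrable (g := fun y => y) hX'meas hmapX measurable_id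
      (invGamma_integrable (g := fun y => y) measurable_id
        (integrable_inv_gamma (by linarith) hC2))
  have intX2 : Integrable (fun ω => X' ω ^ 2) μ :=
    rv_integrable (g := fun y => y ^ 2) hX'meas hmapX (measurable_id.pow_const 2)
      (invGamma_integrable (g := fun y => y ^ 2) (measurable_id.pow_const 2)
        (integrable_inv_sq_gamma haX hC2))
  have intU : Integrable U' μ :=
    rv_integrable (g := fun y => y) hU'meas hmapU measurable_id
      (integrable_id_gamma haU hhalf)
  have intU2 : Integrable (fun ω => U' ω ^ 2) μ :=
    rv_integrable (g := fun y => y ^ 2) hU'meas hmapU (measurable_id.pow_const 2)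
      (integrable_sq_gamma haU hhalf)
  have intiV : Integrable (fun ω => (V' ω)⁻¹) μ :=
    rv_integrable (g := fun y => y⁻¹) hV'meas hmapV measurable_inv
      (integrable_inv_gamma (by linarith) hhalf)
  have intiV2 : Integrable (fun ω => ((V' ω)⁻¹) ^ 2) μ :=
    rv_integrable (g := fun y => (y⁻¹) ^ 2) hV'meas hmapV (measurable_inv.pow_const 2)
      (integrable_inv_sq_gamma haV hhalf)
  -- independence
  have hmeas3 : ∀ i, Measurable (![X', U', V'] i) := by
    intro i; fin_cases i
    · exact hX'meas
    · exact hU'meas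
    · exact hV'meas
  have hindep' : iIndepFun ![X', U', V'] μ := by
    apply iIndepFun_ae_eq hindep
    intro i; fin_cases i
    · exact hXX'
    · exact hUU'
    · exact hVV'
  have hXU : IndepFun X' U' μ := hindep'.indepFun (show (0:Fin 3) ≠ 1 by decide)
  have hpair : IndepFun (fun ω => (X' ω, U' ω)) V' μ :=
    hindep'.indepFun_prodMk hmeas3 0 1 2 (by decide) (by decide)
  have hφ1 : Measurable (fun q : ℝ × ℝ => q.1 * q.2 + C) :=
    (measurable_fst.mul measurable_snd).add_const C
  have hφ2 : Measurable (fun q : ℝ × ℝ => q.1 * (q.1 * q.2 + C)) := measurable_fst.mul hφ1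
  have hW_iV : IndepFun (fun ω => X' ω * U' ω + C) (fun ω => (V' ω)⁻¹) μ :=
    hpair.comp hφ1 measurable_inv
  have hXW_iV : IndepFun (fun ω => X' ω * (X' ω * U' ω + C)) (fun ω => (V' ω)⁻¹) μ :=
    hpair.comp hφ2 measurable_inv
  have hW2_iV2 : IndepFun (fun ω => (X' ω * U' ω + C) ^ 2) (fun ω => ((V' ω)⁻¹) ^ 2) μ :=
    hpair.comp (hφ1.pow_const 2) (measurable_inv.pow_const 2)
  have hX2U : IndepFun (fun ω => X' ω ^ 2) U' μ :=
    hXU.comp (measurable_id.pow_const 2) measurable_id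
  have hX2U2 : IndepFun (fun ω => X' ω ^ 2) (fun ω => U' ω ^ 2) μ :=
    hXU.comp (measurable_id.pow_const 2) (measurable_id.pow_const 2)
  -- integrable products
  have intXU : Integrable (fun ω => X' ω * U' ω) μ := hXU.integrable_mul intX intU
  have intX2U : Integrable (fun ω => X' ω ^ 2 * U' ω) μ := hX2U.integrable_mul intX2 intU
  have intX2U2 : Integrable (fun ω => X' ω ^ 2 * U' ω ^ 2) μ :=
    hX2U2.integrable_mul intX2 intU2
  have intW : Integrable (fun ω => X' ω * U' ω + C) μ := intXU.add (integrable_const C)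
  have intXW : Integrable (fun ω => X' ω * (X' ω * U' ω + C)) μ := by
    have h : Integrable (fun ω => X' ω ^ 2 * U' ω + C * X' ω) μ :=
      intX2U.add (intX.const_mul C)
    have heq : (fun ω => X' ω ^ 2 * U' ω + C * X' ω)
        = fun ω => X' ω * (X' ω * U' ω + C) := by funext ω; ring
    rwa [heq] at h
  have intW2 : Integrable (fun ω => (X' ω * U' ω + C) ^ 2) μ := by
    have h : Integrable (fun ω => X' ω ^ 2 * U' ω ^ 2 + (2*C) * (X' ω * U' ω) + C ^ 2) μ :=
      (intX2U2.add (intXU.const_mul (2*C))).add (integrable_const _)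
    have heq : (fun ω => X' ω ^ 2 * U' ω ^ 2 + (2*C) * (X' ω * U' ω) + C ^ 2)
        = fun ω => (X' ω * U' ω + C) ^ 2 := by funext ω; ring
    rwa [heq] at h
  -- expectations of products
  have EXU : ∫ ω, X' ω * U' ω ∂μ = (∫ ω, X' ω ∂μ) * ∫ ω, U' ω ∂μ :=
    hXU.integral_fun_mul_eq_mul_integral intX.1 intU.1
  have EX2U : ∫ ω, X' ω ^ 2 * U' ω ∂μ = (∫ ω, X' ω ^ 2 ∂μ) * ∫ ω, U' ω ∂μ :=
    hX2U.integral_fun_mul_eq_mul_integral intX2.1 intU.1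
  have EX2U2 : ∫ ω, X' ω ^ 2 * U' ω ^ 2 ∂μ = (∫ ω, X' ω ^ 2 ∂μ) * ∫ ω, U' ω ^ 2 ∂μ :=
    hX2U2.integral_fun_mul_eq_mul_integral intX2.1 intU2.1
  have EW : ∫ ω, (X' ω * U' ω + C) ∂μ = (C/((n:ℝ)-2)) * (p:ℝ) + C := by
    have h : ∫ ω, (X' ω * U' ω + C) ∂μ
        = (∫ ω, X' ω * U' ω ∂μ) + ∫ _, C ∂μ := integral_add intXU (integrable_const C)
    rw [h, EXU, EX, EU, integral_const]
    simp
  have EXW : ∫ ω, X' ω * (X' ω * U' ω + C) ∂μ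
      = (C^2/(((n:ℝ)-2)*((n:ℝ)-4))) * (p:ℝ) + C * (C/((n:ℝ)-2)) := by
    have heq : (fun ω => X' ω * (X' ω * U' ω + C))
        = fun ω => X' ω ^ 2 * U' ω + C * X' ω := by funext ω; ring
    rw [show (∫ ω, X' ω * (X' ω * U' ω + C) ∂μ)
        = ∫ ω, X' ω ^ 2 * U' ω + C * X' ω ∂μ from by rw [heq]]
    have h : ∫ ω, (X' ω ^ 2 * U' ω + C * X' ω) ∂μ
        = (∫ ω, X' ω ^ 2 * U' ω ∂μ) + ∫ ω, C * X' ω ∂μ :=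
      integral_add intX2U (intX.const_mul C)
    rw [h, EX2U, MeasureTheory.integral_const_mul, EX, EX2, EU]
  have EW2 : ∫ ω, (X' ω * U' ω + C) ^ 2 ∂μ
      = (C^2/(((n:ℝ)-2)*((n:ℝ)-4))) * ((p:ℝ) * ((p:ℝ)+2))
        + 2*C*((C/((n:ℝ)-2)) * (p:ℝ)) + C^2 := by
    have heq : (fun ω => (X' ω * U' ω + C) ^ 2)
        = fun ω => X' ω ^ 2 * U' ω ^ 2 + (2*C) * (X' ω * U' ω) + C ^ 2 := by
      funext ω; ring
    rw [show (∫ ω, (X' ω * U' ω + C) ^ 2 ∂μ)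
        = ∫ ω, X' ω ^ 2 * U' ω ^ 2 + (2*C) * (X' ω * U' ω) + C ^ 2 ∂μ from by rw [heq]]
    have hA : ∫ ω, (X' ω ^ 2 * U' ω ^ 2 + (2*C) * (X' ω * U' ω)) ∂μ
        = (∫ ω, X' ω ^ 2 * U' ω ^ 2 ∂μ) + ∫ ω, (2*C) * (X' ω * U' ω) ∂μ :=
      integral_add intX2U2 (intXU.const_mul (2*C))
    have hB : ∫ ω, ((X' ω ^ 2 * U' ω ^ 2 + (2*C) * (X' ω * U' ω)) + C ^ 2) ∂μ
        = (∫ ω, (X' ω ^ 2 * U' ω ^ 2 + (2*C) * (X' ω * U' ω)) ∂μ) + ∫ _, C ^ 2 ∂μ :=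
      integral_add (intX2U2.add (intXU.const_mul (2*C))) (integrable_const _)
    rw [hB, hA, EX2U2, MeasureTheory.integral_const_mul, EXU, EX, EX2, EU, EU2, integral_const]
    simp
  -- products with 1/V
  have EY : ∫ ω, (X' ω * U' ω + C) * (V' ω)⁻¹ ∂μ = C/((n:ℝ)-2) := by
    have h : ∫ ω, (X' ω * U' ω + C) * (V' ω)⁻¹ ∂μ
        = (∫ ω, (X' ω * U' ω + C) ∂μ) * ∫ ω, (V' ω)⁻¹ ∂μ :=
      hW_iV.integral_fun_mul_eq_mul_integral intW.1 intiV.1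
    rw [h, EW, EiV]
    field_simp
    ring
  have EXY : ∫ ω, X' ω * ((X' ω * U' ω + C) * (V' ω)⁻¹) ∂μ
      = ((C^2/(((n:ℝ)-2)*((n:ℝ)-4))) * (p:ℝ) + C * (C/((n:ℝ)-2)))
        * (1/((n:ℝ)+(p:ℝ)-2)) := by
    have heq : (fun ω => X' ω * ((X' ω * U' ω + C) * (V' ω)⁻¹))
        = fun ω => (X' ω * (X' ω * U' ω + C)) * (V' ω)⁻¹ := by funext ω; ring
    rw [show (∫ ω, X' ω * ((X' ω * U' ω + C) * (V' ω)⁻¹) ∂μ)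
        = ∫ ω, (X' ω * (X' ω * U' ω + C)) * (V' ω)⁻¹ ∂μ from by rw [heq]]
    have h : ∫ ω, (X' ω * (X' ω * U' ω + C)) * (V' ω)⁻¹ ∂μ
        = (∫ ω, X' ω * (X' ω * U' ω + C) ∂μ) * ∫ ω, (V' ω)⁻¹ ∂μ :=
      hXW_iV.integral_fun_mul_eq_mul_integral intXW.1 intiV.1
    rw [h, EXW, EiV]
  have EY2 : ∫ ω, ((X' ω * U' ω + C) * (V' ω)⁻¹) ^ 2 ∂μ
      = C^2/(((n:ℝ)-2)*((n:ℝ)-4)) := by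
    have heq : (fun ω => ((X' ω * U' ω + C) * (V' ω)⁻¹) ^ 2)
        = fun ω => (X' ω * U' ω + C) ^ 2 * ((V' ω)⁻¹) ^ 2 := by funext ω; ring
    rw [show (∫ ω, ((X' ω * U' ω + C) * (V' ω)⁻¹) ^ 2 ∂μ)
        = ∫ ω, (X' ω * U' ω + C) ^ 2 * ((V' ω)⁻¹) ^ 2 ∂μ from by rw [heq]]
    have h : ∫ ω, (X' ω * U' ω + C) ^ 2 * ((V' ω)⁻¹) ^ 2 ∂μ
        = (∫ ω, (X' ω * U' ω + C) ^ 2 ∂μ) * ∫ ω, ((V' ω)⁻¹) ^ 2 ∂μ :=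
      hW2_iV2.integral_fun_mul_eq_mul_integral intW2.1 intiV2.1
    rw [h, EW2, EiV2]
    field_simp
    ring
  -- transfer to the original random variables
  have I1 : ∫ ω, X ω ∂μ = C/((n:ℝ)-2) := (integral_congr_ae hXX').trans EX
  have I2 : ∫ ω, X ω ^ 2 ∂μ = C^2/(((n:ℝ)-2)*((n:ℝ)-4)) :=
    (integral_congr_ae (hXX'.mono fun ω h => by rw [h])).trans EX2
  have hae3 : (fun ω => (X ω * U ω + C) / V ω)
      =ᵐ[μ] fun ω => (X' ω * U' ω + C) * (V' ω)⁻¹ := by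
    filter_upwards [hXX', hUU', hVV'] with ω h1 h2 h3
    rw [h1, h2, h3, div_eq_mul_inv]
  have I3 : ∫ ω, (X ω * U ω + C) / V ω ∂μ = C/((n:ℝ)-2) :=
    (integral_congr_ae hae3).trans EY
  have I4 : ∫ ω, ((X ω * U ω + C) / V ω) ^ 2 ∂μ = C^2/(((n:ℝ)-2)*((n:ℝ)-4)) := by
    refine (integral_congr_ae ?_).trans EY2
    filter_upwards [hXX', hUU', hVV'] with ω h1 h2 h3
    rw [h1, h2, h3, div_eq_mul_inv]
  have I5 : ∫ ω, X ω * ((X ω * U ω + C) / V ω) ∂μ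
      = ((C^2/(((n:ℝ)-2)*((n:ℝ)-4))) * (p:ℝ) + C * (C/((n:ℝ)-2)))
        * (1/((n:ℝ)+(p:ℝ)-2)) := by
    refine (integral_congr_ae ?_).trans EXY
    filter_upwards [hXX', hUU', hVV'] with ω h1 h2 h3
    rw [h1, h2, h3, div_eq_mul_inv]
  -- final computation
  simp only [corrRV]
  rw [I1, I2, I3, I4, I5]
  have hv : C^2/(((n:ℝ)-2)*((n:ℝ)-4)) - (C/((n:ℝ)-2))^2
      = 2*C^2/(((n:ℝ)-2)^2*((n:ℝ)-4)) := by
    field_simp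
    ring
  have hvpos : (0:ℝ) < 2*C^2/(((n:ℝ)-2)^2*((n:ℝ)-4)) := by positivity
  rw [hv, Real.mul_self_sqrt hvpos.le]
  rw [div_eq_div_iff hvpos.ne' hnp2.ne']
  field_simp
  ring
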